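/- Each x(ξ) lies in 𝔤^θ_nil = {x ∈ M_N(k) : ᵀ(J·x) = J·x, x nilpotent}, and for ξ ≠ ξ′ in k there is no h ∈ Sp_{2n}(k) such that [[1,0],[0,h]]·x(ξ)·[[1,0],[0,h]]⁻¹ = x(ξ′). Consequently, since k is infinite, the set 𝔤^θ_nil decomposes into infinitely many orbits under conjugation by G^θ = {[[1,0],[0,h]] : h ∈ Sp_{2n}(k)}. -/

import Mathlib

open Matrix

/-- The Gram matrix `J' = [[0, 1ₙ], [1ₙ, 0]]` of the symplectic form on `k^{2n}`. -/
def Jsp (k : Type*) [Field k] (n : ℕ) : Matrix (Fin n ⊕ Fin n) (Fin n ⊕ Fin n) k :=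
  Matrix.fromBlocks 0 1 1 0

/-- The `N × N` matrix `J = [[1,0,0],[0,0,1ₙ],[0,1ₙ,0]]`, `N = 2n+1`, rows/columns indexed by
the ordered basis `(e₀, e₁,…,eₙ, f₁,…,fₙ)`, encoded as `Unit ⊕ (Fin n ⊕ Fin n)`. -/
def JN (k : Type*) [Field k] (n : ℕ) :
    Matrix (Unit ⊕ (Fin n ⊕ Fin n)) (Unit ⊕ (Fin n ⊕ Fin n)) k :=
  Matrix.fromBlocks 1 0 0 (Jsp k n)

/-- The matrix `x(ξ)` acting on the basis `(e₀, e₁,…,eₙ, f₁,…,fₙ)` by: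
`e₀ ↦ ξ·eₙ`, `e₁ ↦ 0`, `eᵢ ↦ e_{i−1}` for `2 ≤ i ≤ n`, `fⱼ ↦ f_{j+1}` for `1 ≤ j ≤ n−1`,
`fₙ ↦ eₙ + ξ·e₀`.  Here `e_{a+1}` has index `Sum.inr (Sum.inl a)` and `f_{b+1}` has index
`Sum.inr (Sum.inr b)` for `a b : Fin n`. -/
def xMat (k : Type*) [Field k] (n : ℕ) (ξ : k) :
    Matrix (Unit ⊕ (Fin n ⊕ Fin n)) (Unit ⊕ (Fin n ⊕ Fin n)) k :=
  fun i j =>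
    match i, j with
    | Sum.inl _, Sum.inl _ => 0
    | Sum.inl _, Sum.inr (Sum.inl _) => 0
    | Sum.inl _, Sum.inr (Sum.inr b) => if (b : ℕ) = n - 1 then ξ else 0
    | Sum.inr (Sum.inl a), Sum.inl _ => if (a : ℕ) = n - 1 then ξ else 0
    | Sum.inr (Sum.inl a), Sum.inr (Sum.inl b) => if (a : ℕ) + 1 = (b : ℕ) then 1 else 0
    | Sum.inr (Sum.inl a), Sum.inr (Sum.inr b) =>
        if (a : ℕ) = n - 1 ∧ (b : ℕ) = n - 1 then 1 else 0
    | Sum.inr (Sum.inr _), Sum.inl _ => 0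
    | Sum.inr (Sum.inr _), Sum.inr (Sum.inl _) => 0
    | Sum.inr (Sum.inr a), Sum.inr (Sum.inr b) => if (b : ℕ) + 1 = (a : ℕ) then 1 else 0

/-- A matrix strictly increasing a weight function is nilpotent. -/
lemma isNilpotent_of_weight {k : Type*} [Field k] {ι : Type*} [Fintype ι] [DecidableEq ι]
    (A : Matrix ι ι k) (w : ι → ℕ) (hw : ∀ i j, A i j ≠ 0 → w i < w j) (B : ℕ)
    (hB : ∀ i, w i ≤ B) : IsNilpotent A := by
  have key : ∀ m (i j : ι), w j < w i + m → (A ^ m) i j = 0 := by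
    intro m
    induction m with
    | zero =>
      intro i j hij
      rw [pow_zero]
      exact Matrix.one_apply_ne (by rintro rfl; omega)
    | succ m ih =>
      intro i j hij
      rw [pow_succ, Matrix.mul_apply]
      apply Finset.sum_eq_zero
      intro l _
      by_cases h1 : w l < w i + m
      · rw [ih i l h1, zero_mul]
      · by_cases h2 : A l j = 0
        · rw [h2, mul_zero]
        · have := hw l j h2; omega
  refine ⟨B + 1, ?_⟩
  ext i j
  rw [Matrix.zero_apply]
  exact key (B + 1) i j (by have := hB j; omega)

/-- The weight function used to show `xMat` is nilpotent. -/
def wt (n : ℕ) : Unit ⊕ (Fin n ⊕ Fin n) → ℕ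
  | Sum.inl _ => n + 1
  | Sum.inr (Sum.inl a) => (a : ℕ) + 1
  | Sum.inr (Sum.inr b) => 2 * n + 1 - (b : ℕ)

lemma xMat_nilpotent {k : Type*} [Field k] (n : ℕ) (ξ : k) : IsNilpotent (xMat k n ξ) := by
  apply isNilpotent_of_weight (xMat k n ξ) (wt n) ?_ (2 * n + 1) ?_
  · intro i j hij
    rcases i with u | (a | b) <;> rcases j with u' | (a' | b')
    all_goals simp only [xMat, wt] at hij ⊢
    all_goals try split_ifs at hij with hc
    all_goals
      first
        | exact absurd rfl hij
        | ((try have h1 := a.isLt); (try have h2 := a'.isLt);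
           (try have h3 := b.isLt); (try have h4 := b'.isLt); omega)
  · intro i
    rcases i with u | (a | b)
    · simp only [wt]; omega
    · simp only [wt]; have := a.isLt; omega
    · simp only [wt]; omega

/-- The pattern of the permutation underlying `JN`. -/
def swp (n : ℕ) : Unit ⊕ (Fin n ⊕ Fin n) → Unit ⊕ (Fin n ⊕ Fin n)
  | Sum.inl u => Sum.inl u
  | Sum.inr (Sum.inl a) => Sum.inr (Sum.inr a)
  | Sum.inr (Sum.inr b) => Sum.inr (Sum.inl b)

lemma JN_mul_apply {k : Type*} [Field k] {n : ℕ}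
    (M : Matrix (Unit ⊕ (Fin n ⊕ Fin n)) (Unit ⊕ (Fin n ⊕ Fin n)) k) (i j) :
    (JN k n * M) i j = M (swp n i) j := by
  rw [Matrix.mul_apply]
  rw [Finset.sum_eq_single (swp n i)]
  · have : JN k n i (swp n i) = 1 := by
      rcases i with u | (a | b) <;>
        simp [JN, Jsp, swp, Matrix.one_apply]
    rw [this, one_mul]
  · intro b _ hb
    have : JN k n i b = 0 := by
      rcases i with u | (a | c) <;> rcases b with u' | (a' | b') <;>
        simp_all [JN, Jsp, swp, Matrix.one_apply] <;> tauto
    rw [this, zero_mul]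
  · intro hmem; exact absurd (Finset.mem_univ _) hmem

lemma sym_part {k : Type*} [Field k] {n : ℕ} (ξ : k) :
    (JN k n * xMat k n ξ)ᵀ = JN k n * xMat k n ξ := by
  ext i j
  rw [Matrix.transpose_apply, JN_mul_apply, JN_mul_apply]
  rcases i with u | (a | b) <;> rcases j with u' | (a' | b') <;>
    simp only [xMat, swp] <;> split_ifs <;> first | rfl | omega | tauto
lemma not_conj {k : Type} [Field k] [CharP k 2] {n : ℕ} (hn : 1 ≤ n) (ξ ξ' : k)
    (hne : ξ ≠ ξ') (h : Matrix (Fin n ⊕ Fin n) (Fin n ⊕ Fin n) k) (hu : IsUnit h)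
    (heq : Matrix.fromBlocks (1 : Matrix Unit Unit k) 0 0 h * xMat k n ξ *
      (Matrix.fromBlocks (1 : Matrix Unit Unit k) 0 0 h)⁻¹ = xMat k n ξ') : False := by
  set g : Matrix (Unit ⊕ (Fin n ⊕ Fin n)) (Unit ⊕ (Fin n ⊕ Fin n)) k :=
    Matrix.fromBlocks (1 : Matrix Unit Unit k) 0 0 h with hg
  have hdet : IsUnit g.det := by
    rw [hg, Matrix.det_fromBlocks_zero₂₁, Matrix.det_one, one_mul]
    exact (Matrix.isUnit_iff_isUnit_det h).mp hu
  have hinv : g⁻¹ * g = 1 := Matrix.nonsing_inv_mul g hdet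
  have hmain : g * xMat k n ξ = xMat k n ξ' * g := by
    calc g * xMat k n ξ = g * xMat k n ξ * (g⁻¹ * g) := by rw [hinv, mul_one]
    _ = (g * xMat k n ξ * g⁻¹) * g := (mul_assoc _ _ _).symm
    _ = xMat k n ξ' * g := by rw [heq]
  set aN : Fin n := ⟨n - 1, by omega⟩ with haN
  have haNv : (aN : ℕ) = n - 1 := rfl
  have L1 : (g * xMat k n ξ) (Sum.inl ()) (Sum.inr (Sum.inr aN)) = ξ := by
    rw [Matrix.mul_apply, Finset.sum_eq_single (Sum.inl () : Unit ⊕ (Fin n ⊕ Fin n))]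
    · simp [hg, xMat, haNv]
    · intro b _ hb
      rcases b with u | d
      · exact absurd rfl hb
      · simp [hg]
    · simp
  have R1 : (xMat k n ξ' * g) (Sum.inl ()) (Sum.inr (Sum.inr aN)) =
      ξ' * h (Sum.inr aN) (Sum.inr aN) := by
    rw [Matrix.mul_apply, Finset.sum_eq_single (Sum.inr (Sum.inr aN) : Unit ⊕ (Fin n ⊕ Fin n))]
    · simp [hg, xMat, haNv]
    · intro b _ hb
      rcases b with u | (a | b')
      · simp [xMat]
      · simp [xMat]
      · simp only [ne_eq, Sum.inr.injEq] at hb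
        have : (b' : ℕ) ≠ n - 1 := fun hv => hb (Fin.ext (hv.trans haNv.symm))
        simp [xMat, this]
    · simp
  have E1 : ξ = ξ' * h (Sum.inr aN) (Sum.inr aN) := by
    have e := congrFun (congrFun hmain (Sum.inl ())) (Sum.inr (Sum.inr aN))
    rw [L1, R1] at e; exact e
  have L2 : (g * xMat k n ξ) (Sum.inr (Sum.inl aN)) (Sum.inl ()) =
      h (Sum.inl aN) (Sum.inl aN) * ξ := by
    rw [Matrix.mul_apply, Finset.sum_eq_single (Sum.inr (Sum.inl aN) : Unit ⊕ (Fin n ⊕ Fin n))]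
    · simp [hg, xMat, haNv]
    · intro b _ hb
      rcases b with u | (a | b')
      · simp [xMat]
      · simp only [ne_eq, Sum.inr.injEq, Sum.inl.injEq] at hb
        have : (a : ℕ) ≠ n - 1 := fun hv => hb (Fin.ext (hv.trans haNv.symm))
        simp [xMat, this]
      · simp [xMat]
    · simp
  have R2 : (xMat k n ξ' * g) (Sum.inr (Sum.inl aN)) (Sum.inl ()) = ξ' := by
    rw [Matrix.mul_apply, Finset.sum_eq_single (Sum.inl () : Unit ⊕ (Fin n ⊕ Fin n))]
    · simp [hg, xMat, haNv]
    · intro b _ hb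
      rcases b with u | d
      · exact absurd rfl hb
      · simp [hg]
    · simp
  have E2 : h (Sum.inl aN) (Sum.inl aN) * ξ = ξ' := by
    have e := congrFun (congrFun hmain (Sum.inr (Sum.inl aN))) (Sum.inl ())
    rw [L2, R2] at e; exact e
  have L3 : (g * xMat k n ξ) (Sum.inr (Sum.inl aN)) (Sum.inr (Sum.inr aN)) =
      h (Sum.inl aN) (Sum.inl aN) := by
    rw [Matrix.mul_apply, Finset.sum_eq_single (Sum.inr (Sum.inl aN) : Unit ⊕ (Fin n ⊕ Fin n))]
    · simp [hg, xMat, haNv]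
    · intro b _ hb
      rcases b with u | (a | b')
      · simp [hg]
      · simp only [ne_eq, Sum.inr.injEq, Sum.inl.injEq] at hb
        have : (a : ℕ) ≠ n - 1 := fun hv => hb (Fin.ext (hv.trans haNv.symm))
        simp [xMat, this]
      · have : ¬ ((aN : ℕ) + 1 = (b' : ℕ)) := by
          have := b'.isLt; rw [haNv]; omega
        simp [xMat, this]
    · simp
  have R3 : (xMat k n ξ' * g) (Sum.inr (Sum.inl aN)) (Sum.inr (Sum.inr aN)) =
      h (Sum.inr aN) (Sum.inr aN) := by
    rw [Matrix.mul_apply, Finset.sum_eq_single (Sum.inr (Sum.inr aN) : Unit ⊕ (Fin n ⊕ Fin n))]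
    · simp [hg, xMat, haNv]
    · intro b _ hb
      rcases b with u | (a | b')
      · simp [hg]
      · have : ¬ ((aN : ℕ) + 1 = (a : ℕ)) := by
          have := a.isLt; rw [haNv]; omega
        simp [xMat, this]
      · simp only [ne_eq, Sum.inr.injEq] at hb
        have : (b' : ℕ) ≠ n - 1 := fun hv => hb (Fin.ext (hv.trans haNv.symm))
        simp [xMat, this]
    · simp
  have E3 : h (Sum.inl aN) (Sum.inl aN) = h (Sum.inr aN) (Sum.inr aN) := by
    have e := congrFun (congrFun hmain (Sum.inr (Sum.inl aN))) (Sum.inr (Sum.inr aN))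
    rw [L3, R3] at e; exact e
  set p := h (Sum.inl aN) (Sum.inl aN) with hp
  rw [← E3] at E1
  -- E1 : ξ = ξ' * p,  E2 : p * ξ = ξ'
  by_cases hξ : ξ = 0
  · exact hne (by rw [hξ, ← E2, hξ, mul_zero])
  · have hpp : p * p = 1 := by
      have : ξ * (p * p) = ξ * 1 := by linear_combination p * E2 - E1
      exact mul_left_cancel₀ hξ this
    have h2 : (2 : k) = 0 := by
      have := CharP.cast_eq_zero k 2; push_cast at this; exact this
    have hsq : (p - 1) ^ 2 = 0 := by linear_combination hpp + (1 - p) * h2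
    have hp1 : p = 1 := by
      have := pow_eq_zero_iff (n := 2) (two_ne_zero) |>.mp hsq
      exact sub_eq_zero.mp this
    exact hne (by rw [← E2, hp1, one_mul])

/-- Each `x(ξ)` lies in `𝔤^θ_nil`, distinct `ξ ≠ ξ′` give elements which are
not conjugate under `G^θ = {[[1,0],[0,h]] : h ∈ Sp_{2n}(k)}`, and consequently (since `k`
is infinite) `𝔤^θ_nil` decomposes into infinitely many `G^θ`-orbits. -/
theorem stmt_6 (k : Type) [Field k] [IsAlgClosed k] [CharP k 2] (n : ℕ) (hn : 1 ≤ n) :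
    (∀ ξ : k, (JN k n * xMat k n ξ)ᵀ = JN k n * xMat k n ξ ∧ IsNilpotent (xMat k n ξ)) ∧
    (∀ ξ ξ' : k, ξ ≠ ξ' →
      ¬ ∃ h : Matrix (Fin n ⊕ Fin n) (Fin n ⊕ Fin n) k,
        IsUnit h ∧ hᵀ * Jsp k n * h = Jsp k n ∧
        Matrix.fromBlocks (1 : Matrix Unit Unit k) 0 0 h * xMat k n ξ *
          (Matrix.fromBlocks (1 : Matrix Unit Unit k) 0 0 h)⁻¹ = xMat k n ξ') ∧
    {s : Set (Matrix (Unit ⊕ (Fin n ⊕ Fin n)) (Unit ⊕ (Fin n ⊕ Fin n)) k) |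
      ∃ x, (JN k n * x)ᵀ = JN k n * x ∧ IsNilpotent x ∧
        s = {y | ∃ h : Matrix (Fin n ⊕ Fin n) (Fin n ⊕ Fin n) k,
          IsUnit h ∧ hᵀ * Jsp k n * h = Jsp k n ∧
          y = Matrix.fromBlocks (1 : Matrix Unit Unit k) 0 0 h * x *
            (Matrix.fromBlocks (1 : Matrix Unit Unit k) 0 0 h)⁻¹}}.Infinite := by
  refine ⟨fun ξ => ⟨sym_part ξ, xMat_nilpotent n ξ⟩, ?_, ?_⟩
  · rintro ξ ξ' hne ⟨h, hu, -, heq⟩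
    exact not_conj hn ξ ξ' hne h hu heq
  · set f : k → Set (Matrix (Unit ⊕ (Fin n ⊕ Fin n)) (Unit ⊕ (Fin n ⊕ Fin n)) k) :=
      fun ξ => {y | ∃ h : Matrix (Fin n ⊕ Fin n) (Fin n ⊕ Fin n) k,
        IsUnit h ∧ hᵀ * Jsp k n * h = Jsp k n ∧
        y = Matrix.fromBlocks (1 : Matrix Unit Unit k) 0 0 h * xMat k n ξ *
          (Matrix.fromBlocks (1 : Matrix Unit Unit k) 0 0 h)⁻¹} with hf
    have hmem : ∀ ξ : k, xMat k n ξ ∈ f ξ := by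
      intro ξ
      refine ⟨1, isUnit_one, by simp, ?_⟩
      rw [Matrix.fromBlocks_one, inv_one, one_mul, mul_one]
    apply Set.infinite_of_injective_forall_mem (f := f)
    · intro ξ ξ' hff
      by_contra hne
      have h1 : xMat k n ξ' ∈ f ξ' := hmem ξ'
      rw [← hff] at h1
      obtain ⟨h, hu, -, hy⟩ := h1
      exact not_conj hn ξ ξ' hne h hu hy.symm
    · intro ξ
      exact ⟨xMat k n ξ, sym_part ξ, xMat_nilpotent n ξ, rfl⟩
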